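/- Let r ≥ 2, let H be an r-uniform hypergraph, let u be a vertex of H, and let x ≥ r be an integer. If u covers at least C(x, r) distinct r-sets of vertices of H, then the degree of u in H is at least C(x, r−1). -/

import Mathlib

open Finset

/-- `u` covers the set `A` in the `r`-uniform hypergraph `H`: `u ∉ A` and every set
`B ∪ {u}` with `B` an `(r-1)`-subset of `A` is an edge of `H`. -/
def Covers {n : ℕ} (r : ℕ) (H : Finset (Finset (Fin n))) (u : Fin n) (A : Finset (Fin n)) : Prop :=
  u ∉ A ∧ ∀ B ⊆ A, B.card = r - 1 → insert u B ∈ H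

/-- `A` is covered in `H` if some vertex covers it. -/
def CoveredIn {n : ℕ} (r : ℕ) (H : Finset (Finset (Fin n))) (A : Finset (Fin n)) : Prop :=
  ∃ u, Covers r H u A

/-- `H` is an `r`-uniform hypergraph. -/
def IsUniform {n : ℕ} (r : ℕ) (H : Finset (Finset (Fin n))) : Prop :=
  ∀ e ∈ H, e.card = r

/-- `H` is an `r`-uniform hypergraph on `[n]` in which every `k`-set of vertices is covered. -/
def CoversAllK (n k r : ℕ) (H : Finset (Finset (Fin n))) : Prop :=
  IsUniform r H ∧ ∀ A : Finset (Fin n), A.card = k → CoveredIn r H A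

/-- `f n k r`: the minimum number of edges in an `r`-uniform hypergraph on `[n]`
in which every `k`-set of vertices is covered. -/
noncomputable def f (n k r : ℕ) : ℕ :=
  sInf {m | ∃ H : Finset (Finset (Fin n)), CoversAllK n k r H ∧ H.card = m}

/-- `H` is an `r`-uniform hypergraph on `[n]` such that every `(r-1)`-set of vertices
is contained in some edge. -/
def CoversShadows (n r : ℕ) (H : Finset (Finset (Fin n))) : Prop :=
  IsUniform r H ∧ ∀ B : Finset (Fin n), B.card = r - 1 → ∃ e ∈ H, B ⊆ e

/-- `D n r`: minimum number of edges of an `r`-uniform hypergraph on `[n]` covering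
all `(r-1)`-sets. -/
noncomputable def D (n r : ℕ) : ℕ :=
  sInf {m | ∃ H : Finset (Finset (Fin n)), CoversShadows n r H ∧ H.card = m}

/-- `g n k r = C(n,r) - C(n-k+r-1,r) + D(n-k+r-1,r)`. -/
noncomputable def g (n k r : ℕ) : ℕ :=
  n.choose r - (n - k + r - 1).choose r + D (n - k + r - 1) r

/-- Membership in the extremal family `𝒢(n,k,r)`: all `r`-sets meeting the first
`k-r+1` vertices, together with `D(n-k+r-1,r)` `r`-sets on the remaining vertices
whose shadow contains every `(r-1)`-set of the remaining vertices. -/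
def InG (n k r : ℕ) (H : Finset (Finset (Fin n))) : Prop :=
  ∃ S : Finset (Finset (Fin n)),
    S.card = D (n - k + r - 1) r ∧
    (∀ e ∈ S, e.card = r ∧ ∀ v ∈ e, k - r + 1 ≤ (v : ℕ)) ∧
    (∀ B : Finset (Fin n), B.card = r - 1 → (∀ v ∈ B, k - r + 1 ≤ (v : ℕ)) →
      ∃ e ∈ S, B ⊆ e) ∧
    H = (Finset.univ.filter
          fun e : Finset (Fin n) => e.card = r ∧ ∃ v ∈ e, (v : ℕ) < k - r + 1) ∪ S

/-- The degree of a vertex in a hypergraph. -/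
def degreeH {n : ℕ} (H : Finset (Finset (Fin n))) (v : Fin n) : ℕ :=
  (H.filter fun e => v ∈ e).card

instance coversDecidable {n : ℕ} (r : ℕ) (H : Finset (Finset (Fin n))) (u : Fin n)
    (A : Finset (Fin n)) : Decidable (Covers r H u A) :=
  decidable_of_iff (u ∉ A ∧ ∀ B ∈ A.powerset, B.card = r - 1 → insert u B ∈ H) (by
    simp [Covers, Finset.mem_powerset])

set_option maxHeartbeats 1000000 in
/-- Kruskal–Katona consequence: if a vertex `u` of an `r`-uniform hypergraph covers at
least `C(x,r)` distinct `r`-sets (`x ≥ r` an integer), then `u` has degree at least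
`C(x,r-1)`. -/
theorem degree_of_covering_vertex (n r : ℕ) (hr : 2 ≤ r) (H : Finset (Finset (Fin n)))
    (hH : IsUniform r H) (u : Fin n) (x : ℕ) (hx : r ≤ x)
    (hcov : x.choose r ≤ {A : Finset (Fin n) | A.card = r ∧ Covers r H u A}.ncard) :
    x.choose (r - 1) ≤ degreeH H u := by
  set 𝒜 : Finset (Finset (Fin n)) :=
    Finset.univ.filter (fun A => A.card = r ∧ Covers r H u A) with h𝒜
  have hset : {A : Finset (Fin n) | A.card = r ∧ Covers r H u A} = ↑𝒜 := by
    ext A; simp [h𝒜]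
  rw [hset, Set.ncard_coe_finset] at hcov
  have h𝒜r : (𝒜 : Set (Finset (Fin n))).Sized r := by
    intro A hA
    simp only [h𝒜, coe_filter, Set.mem_setOf_eq] at hA
    exact hA.2.1
  -- x ≤ n
  have hxn : x ≤ n := by
    by_contra hlt
    push_neg at hlt
    have hub : 𝒜.card ≤ n.choose r := by
      have : 𝒜 ⊆ Finset.univ.powersetCard r := by
        intro A hA
        simp only [mem_powersetCard]
        exact ⟨subset_univ _, h𝒜r hA⟩
      simpa [card_powersetCard] using card_le_card this
    have hstrict : n.choose r < x.choose r := by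
      rcases lt_or_ge n r with h | h
      · have : n.choose r = 0 := Nat.choose_eq_zero_of_lt h
        rw [this]
        exact Nat.choose_pos hx
      · calc n.choose r < (n+1).choose r := by
              have h1 : (n+1).choose ((r-1)+1) = n.choose (r-1) + n.choose ((r-1)+1) :=
                Nat.choose_succ_succ _ _
              have hr1 : (r-1)+1 = r := by omega
              rw [hr1] at h1
              have hp : 0 < n.choose (r-1) := Nat.choose_pos (by omega)
              omega
            _ ≤ x.choose r := Nat.choose_le_choose r hlt
    omega
  have kk := Finset.kruskal_katona_lovasz_form (i := 1) (by omega) hx hxn h𝒜r hcov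
  simp only [Function.iterate_one] at kk
  have hinst : (fun a b => LinearOrder.toDecidableEq a b : DecidableEq (Fin n)) =
      instDecidableEqFin n := Subsingleton.elim _ _
  have kk' : x.choose (r - 1) ≤ #𝒜.shadow := kk
  refine kk'.trans ?_
  unfold degreeH
  refine Finset.card_le_card_of_injOn (fun B => insert u B) ?_ ?_
  · intro B hB
    rw [mem_coe, mem_shadow_iff_exists_mem_card_add_one] at hB
    obtain ⟨A, hA, hBA, hcard⟩ := hB
    simp only [h𝒜, mem_filter] at hA
    obtain ⟨-, hAr, huA, hcovA⟩ := hA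
    have hBr : B.card = r - 1 := by omega
    simp only [mem_coe, mem_filter]
    exact ⟨hcovA B hBA hBr, mem_insert_self u B⟩
  · intro B hB B' hB' heq
    simp only [mem_coe, mem_shadow_iff_exists_mem_card_add_one] at hB hB'
    obtain ⟨A, hA, hBA, -⟩ := hB
    obtain ⟨A', hA', hBA', -⟩ := hB'
    simp only [h𝒜, mem_filter] at hA hA'
    have h1 : u ∉ B := fun h => hA.2.2.1 (hBA h)
    have h2 : u ∉ B' := fun h => hA'.2.2.1 (hBA' h)
    have h3 : (insert u B).erase u = (insert u B').erase u := by
      simp only at heq; rw [heq]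
    rwa [erase_insert h1, erase_insert h2] at h3
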